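/- If X is a small generated space, i.e., π₁(X,x) = π₁^sg(X,x) for all x, then π₁^qtop(X,x) carries the indiscrete topology (and is in particular a topological group). -/

import Mathlib

open FundamentalGroup

attribute [local instance] Path.Homotopic.setoid

open Topology

noncomputable section

/-- A loop `β` based at `y` is a *small loop* if it is homotopic (rel endpoints) to a loop
contained in every open neighborhood of `y`. -/
def IsSmallLoop {X : TopCat} {y : X} (β : Path y y) : Prop :=
  ∀ U : Set X, IsOpen U → y ∈ U →
    ∃ β' : Path y y, (∀ t, β' t ∈ U) ∧ Path.Homotopic β β'

/-- The small loop group `π₁ˢ(X, x)`: the set of homotopy classes of small loops at `x`. -/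
def smallLoopSet {X : TopCat} (x : X) : Set (FundamentalGroup X x) :=
  {g | ∃ β : Path x x, IsSmallLoop β ∧ g = fromPath ⟦β⟧}

/-- The SG subgroup `π₁ˢᵍ(X, x)`: generated by conjugates of small loop classes along paths. -/
def sgSubgroup {X : TopCat} (x : X) : Subgroup (FundamentalGroup X x) :=
  Subgroup.closure {g | ∃ (y : X) (α : Path x y) (β : Path y y),
    IsSmallLoop β ∧ g = fromPath ⟦α.trans (β.trans α.symm)⟧}

/-- The quotient topology on the fundamental group, coinduced from the loop space
(with the compact-open topology). -/
def qtop {X : TopCat} (x : X) : TopologicalSpace (FundamentalGroup X x) :=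
  TopologicalSpace.coinduced (fun β : Path x x => fromPath ⟦β⟧) inferInstance

section Helpers

open CategoryTheory

variable {X : TopCat} {x y z : X}

lemma fromPath_mul (p q : Path x x) :
    fromPath ⟦p.trans q⟧ = fromPath ⟦q⟧ * fromPath ⟦p⟧ :=
  rfl

lemma fromPath_homotopic {p q : Path x x} (h : Path.Homotopic p q) :
    fromPath ⟦p⟧ = fromPath ⟦q⟧ := by
  rw [Quotient.sound h]

lemma fromPath_one : fromPath ⟦Path.refl x⟧ = (1 : FundamentalGroup X x) :=
  rfl

lemma fromPath_inv (p : Path x x) : (fromPath ⟦p⟧)⁻¹ = fromPath ⟦p.symm⟧ :=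
  rfl

lemma fromPath_toPath (g : FundamentalGroup X x) : fromPath (toPath g) = g :=
  rfl

lemma fromPath_surjective (g : FundamentalGroup X x) :
    ∃ δ : Path x x, fromPath ⟦δ⟧ = g :=
  ⟨Quotient.out (s := Path.Homotopic.setoid x x) (toPath g), by
    exact Quotient.out_eq (s := Path.Homotopic.setoid x x) (toPath g)⟩

lemma IsSmallLoop.symm {β : Path y y} (h : IsSmallLoop β) : IsSmallLoop β.symm := by
  intro U hU hy
  obtain ⟨β', h1, h2⟩ := h U hU hy
  exact ⟨β'.symm, fun t => by rw [Path.symm_apply]; exact h1 _, ⟨h2.some.symm₂⟩⟩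

lemma class_eq (δ : Path x x) (α : Path x y) (γ : Path y y) :
    fromPath ⟦(δ.trans α).trans (γ.trans α.symm)⟧ =
      fromPath ⟦α.trans (γ.trans α.symm)⟧ * fromPath ⟦δ⟧ := by
  rw [← fromPath_mul]
  exact fromPath_homotopic ⟨Path.Homotopy.transAssoc δ α (γ.trans α.symm)⟩

lemma mid_refl {p : Path x y} {r : Path y z} (t : unitInterval)
    (h1 : 1/2 ≤ (t : ℝ)) (h2 : (t : ℝ) ≤ 3/4) :
    (p.trans ((Path.refl y).trans r)) t = y := by
  rw [Path.trans_apply]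
  split_ifs with h
  · have ht : (t : ℝ) = 1/2 := le_antisymm h h1
    have key : ∀ hh : 2 * (t : ℝ) ∈ unitInterval, p ⟨2 * (t : ℝ), hh⟩ = y := by
      intro hh
      have : (⟨2 * (t : ℝ), hh⟩ : unitInterval) = 1 := Subtype.ext (by simp [ht])
      rw [this, p.target]
    exact key _
  · rw [Path.trans_apply]
    split_ifs with h'
    · exact Path.refl_apply _ _
    · exfalso; push_neg at h'; nlinarith

lemma mid_mem {p : Path x y} {γ : Path y y} {r : Path y z} {S : Set X}
    (hγ : ∀ s, γ s ∈ S) (t : unitInterval)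
    (h1 : 1/2 ≤ (t : ℝ)) (h2 : (t : ℝ) ≤ 3/4) :
    (p.trans (γ.trans r)) t ∈ S := by
  rw [Path.trans_apply]
  split_ifs with h
  · have ht : (t : ℝ) = 1/2 := le_antisymm h h1
    have key : ∀ hh : 2 * (t : ℝ) ∈ unitInterval, p ⟨2 * (t : ℝ), hh⟩ ∈ S := by
      intro hh
      have : (⟨2 * (t : ℝ), hh⟩ : unitInterval) = 1 := Subtype.ext (by simp [ht])
      rw [this, p.target]
      have h0 := hγ 0
      rwa [γ.source] at h0
    exact key _
  · rw [Path.trans_apply]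
    split_ifs with h'
    · exact hγ _
    · exfalso; push_neg at h'; nlinarith

lemma outside_eq {p : Path x y} (γ γ' : Path y y) (r : Path y z) (t : unitInterval)
    (h : ¬(1/2 ≤ (t : ℝ) ∧ (t : ℝ) ≤ 3/4)) :
    (p.trans (γ.trans r)) t = (p.trans (γ'.trans r)) t := by
  push_neg at h
  rw [Path.trans_apply, Path.trans_apply]
  split_ifs with h1
  · rfl
  · push_neg at h1
    rw [Path.trans_apply, Path.trans_apply]
    split_ifs with h2
    · exfalso; have := h h1.le; nlinarith
    · rfl

/-- The key step: open sets in the quotient topology absorb left multiplication by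
conjugates of small loop classes. -/
lemma step {U : Set (FundamentalGroup X x)}
    (hU : IsOpen[qtop x] U) (α : Path x y) (β : Path y y) (hβ : IsSmallLoop β)
    {g : FundamentalGroup X x} (hg : g ∈ U) :
    fromPath ⟦α.trans (β.trans α.symm)⟧ * g ∈ U := by
  obtain ⟨δ, rfl⟩ := fromPath_surjective g
  have hV : IsOpen ((fun p : Path x x => fromPath ⟦p⟧) ⁻¹' U) :=
    isOpen_coinduced.mp hU
  obtain ⟨V', hV', hVeq⟩ := isOpen_induced_iff.mp hV
  set ε : Path x x := (δ.trans α).trans ((Path.refl y).trans α.symm) with hεdef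
  have hεU : fromPath ⟦ε⟧ ∈ U := by
    have h2 : fromPath ⟦α.trans ((Path.refl y).trans α.symm)⟧ = 1 := by
      have hh : Path.Homotopic (α.trans ((Path.refl y).trans α.symm)) (Path.refl x) := by
        refine Path.Homotopic.trans
          (Path.Homotopic.hcomp (Path.Homotopic.refl α) ⟨Path.Homotopy.reflTrans α.symm⟩) ?_
        exact ⟨(Path.Homotopy.reflTransSymm α).symm⟩
      rw [fromPath_homotopic hh]; exact fromPath_one
    rw [hεdef, class_eq, h2, one_mul]; exact hg
  have hεV' : ε.toContinuousMap ∈ V' := by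
    have : ε ∈ (fun p : Path x x => fromPath ⟦p⟧) ⁻¹' U := hεU
    rw [← hVeq] at this; exact this
  have hb := TopologicalSpace.isTopologicalBasis_of_subbasis
    (ContinuousMap.compactOpen_eq (X := unitInterval) (Y := X))
  obtain ⟨t0, ht0, hεt, htV'⟩ := hb.exists_subset_of_mem_open hεV' hV'
  obtain ⟨F, ⟨hFfin, hFsub⟩, rfl⟩ := ht0
  haveI := hFfin.to_subtype
  have hchoose : ∀ m : F, ∃ KU : Set unitInterval × Set X, IsCompact KU.1 ∧ IsOpen KU.2 ∧
      (m : Set C(unitInterval, X)) = {f : C(unitInterval, X) | Set.MapsTo f KU.1 KU.2} := by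
    rintro ⟨m, hm⟩
    obtain ⟨K, hK, U', hU', heq⟩ := Set.mem_image2.mp (hFsub hm)
    exact ⟨(K, U'), hK, hU', heq.symm⟩
  choose KU hK hO hm using hchoose
  set J : Set F := {m | ∃ t : unitInterval, t ∈ (KU m).1 ∧ 1/2 ≤ (t:ℝ) ∧ (t:ℝ) ≤ 3/4} with hJ
  set W : Set X := ⋂ m ∈ J, (KU m).2 with hW
  have hWopen : IsOpen W := (Set.toFinite J).isOpen_biInter fun m _ => hO m
  have hεmem : ∀ m : F, Set.MapsTo ε (KU m).1 (KU m).2 := by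
    intro m
    have h1 : ε.toContinuousMap ∈ (m : Set C(unitInterval, X)) :=
      Set.mem_sInter.mp hεt m m.2
    rw [hm m] at h1
    exact h1
  have hyW : y ∈ W := by
    refine Set.mem_iInter₂.mpr fun m hmJ => ?_
    obtain ⟨t, htK, h1, h2⟩ := hmJ
    have := hεmem m htK
    rwa [hεdef, mid_refl t h1 h2] at this
  obtain ⟨β', hβ'W, hββ'⟩ := hβ W hWopen hyW
  set ε' : Path x x := (δ.trans α).trans (β'.trans α.symm) with hε'def
  have hε'mem : ∀ m : F, Set.MapsTo ε' (KU m).1 (KU m).2 := by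
    intro m t htK
    by_cases hmid : 1/2 ≤ (t : ℝ) ∧ (t : ℝ) ≤ 3/4
    · have hmJ : m ∈ J := ⟨t, htK, hmid.1, hmid.2⟩
      have hmemW : ε' t ∈ W := mid_mem hβ'W t hmid.1 hmid.2
      exact Set.biInter_subset_of_mem hmJ hmemW
    · rw [hε'def, outside_eq β' (Path.refl y) α.symm t hmid]
      exact hεmem m htK
  have hε'V : ε' ∈ (fun p : Path x x => fromPath ⟦p⟧) ⁻¹' U := by
    rw [← hVeq]
    refine htV' (Set.mem_sInter.mpr fun m hmF => ?_)
    have h2 : ε'.toContinuousMap ∈ (↑(⟨m, hmF⟩ : F) : Set C(unitInterval, X)) := by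
      rw [hm ⟨m, hmF⟩]; exact hε'mem ⟨m, hmF⟩
    exact h2
  have hclass : fromPath ⟦α.trans (β.trans α.symm)⟧ * fromPath ⟦δ⟧ = fromPath ⟦ε'⟧ := by
    rw [hε'def, class_eq]
    congr 1
    exact fromPath_homotopic (Path.Homotopic.hcomp (Path.Homotopic.refl α)
      (Path.Homotopic.hcomp hββ' (Path.Homotopic.refl α.symm)))
  rw [hclass]
  exact hε'V

end Helpers

/-- If `X` is a small generated space (`π₁(X, x) = π₁ˢᵍ(X, x)` for all `x`), then
`π₁ᑫᵗᵒᵖ(X, x)` carries the indiscrete topology. -/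
theorem qtop_indiscrete_of_small_generated {X : TopCat}
    (h : ∀ y : X, (sgSubgroup y : Set (FundamentalGroup X y)) = Set.univ) :
    ∀ x : X, qtop x = ⊤ := by
  intro x
  refine le_antisymm le_top ?_
  rw [TopologicalSpace.le_def]
  intro U hU
  rw [TopologicalSpace.isOpen_top_iff]
  rcases Set.eq_empty_or_nonempty U with hE | ⟨g₀, hg₀⟩
  · exact Or.inl hE
  right
  have key : ∀ s ∈ sgSubgroup x, ∀ u ∈ U, s * u ∈ U ∧ s⁻¹ * u ∈ U := by
    intro s hs
    refine Subgroup.closure_induction (p := fun s _ => ∀ u ∈ U, s * u ∈ U ∧ s⁻¹ * u ∈ U)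
      ?_ ?_ ?_ ?_ hs
    · rintro g ⟨y, α, β, hβ, rfl⟩ u hu
      constructor
      · exact step hU α β hβ hu
      · have hinv : (fromPath ⟦α.trans (β.trans α.symm)⟧)⁻¹ =
            fromPath ⟦α.trans (β.symm.trans α.symm)⟧ := by
          rw [fromPath_inv]
          apply fromPath_homotopic
          rw [Path.trans_symm, Path.trans_symm, Path.symm_symm]
          exact ⟨Path.Homotopy.transAssoc α β.symm α.symm⟩
        rw [hinv]
        exact step hU α β.symm hβ.symm hu
    · intro u hu; exact ⟨by rwa [one_mul], by rwa [inv_one, one_mul]⟩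
    · intro a b _ _ ha hb u hu
      constructor
      · rw [mul_assoc]; exact (ha _ ((hb u hu).1)).1
      · rw [mul_inv_rev, mul_assoc]; exact (hb _ ((ha u hu).2)).2
    · intro a _ ha u hu
      exact ⟨(ha u hu).2, by rw [inv_inv]; exact (ha u hu).1⟩
  ext g
  simp only [Set.mem_univ, iff_true]
  have hs : g * g₀⁻¹ ∈ sgSubgroup x := by
    have := h x
    rw [Set.eq_univ_iff_forall] at this
    exact this _
  have := (key _ hs g₀ hg₀).1
  rwa [inv_mul_cancel_right] at this
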